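/- Let f: ℝ × ℝ^d → ℝ be C¹, and suppose f satisfies: for each i and each w ∈ [0,∞)^d \ {0} with w_i = 0, (e₀ + e_i - ‖w‖₁^{-1}Σ_{j≠i} w_j e_j)·∇f(log‖w‖₁, arg(w)) = 0. Then the function g(w) = f(log‖w‖₁, arg(w)) satisfies ∂g/∂z_i(w) = 0 for all w ∈ [0,∞)^d \ {0} with w_i = 0 (interpreting the derivative as the limit from the interior). -/

import Mathlib

open Real Finset

/-- Functions in class 𝒟 (vanishing conormal derivative in the Lamperti coordinates)
correspond to functions `g(w) = f(log‖w‖₁, arg w)` with vanishing normal derivative at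
the faces of the orthant. -/
theorem classD_implies_neumann (d : ℕ) (hd : 1 ≤ d)
    (f : ℝ × (Fin d → ℝ) → ℝ) (hf : ContDiff ℝ 1 f)
    (hbc : ∀ (i : Fin d) (w : Fin d → ℝ), (∀ k, 0 ≤ w k) → w ≠ 0 → w i = 0 →
      fderiv ℝ f (Real.log (∑ k, w k), fun k => w k / ∑ k, w k)
        ((1 : ℝ), fun j => if j = i then (1 : ℝ) else -(w j / ∑ k, w k)) = 0)
    (g : (Fin d → ℝ) → ℝ)
    (hg : g = fun w => f (Real.log (∑ k, w k), fun k => w k / ∑ k, w k)) :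
    ∀ (i : Fin d) (w : Fin d → ℝ), (∀ k, 0 ≤ w k) → w ≠ 0 → w i = 0 →
      fderiv ℝ g w (Pi.single i 1) = 0 := by
  intro i w hw hw0 hwi
  obtain ⟨k0, hk0⟩ : ∃ k, w k ≠ 0 := Function.ne_iff.mp hw0
  set s : ℝ := ∑ k, w k with hsdef
  have hs : 0 < s :=
    Finset.sum_pos' (fun k _ => hw k) ⟨k0, Finset.mem_univ _, (hw k0).lt_of_ne (Ne.symm hk0)⟩
  set S : (Fin d → ℝ) →L[ℝ] ℝ := ∑ k, ContinuousLinearMap.proj k with hS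
  have hSapp : ∀ v : Fin d → ℝ, S v = ∑ k, v k := by
    intro v
    simp [hS, ContinuousLinearMap.sum_apply]
  have hsum : HasFDerivAt (fun v : Fin d → ℝ => ∑ k, v k) S w := by
    have : (fun v : Fin d → ℝ => ∑ k, v k) = ⇑S := by
      ext v; exact (hSapp v).symm
    rw [this]; exact S.hasFDerivAt
  have hlog : HasFDerivAt (fun v : Fin d → ℝ => Real.log (∑ k, v k)) (s⁻¹ • S) w := by
    have := (Real.hasDerivAt_log hs.ne').comp_hasFDerivAt w hsum
    simpa [Function.comp_def] using this
  have hinv : HasFDerivAt (fun v : Fin d → ℝ => (∑ k, v k)⁻¹) (-((s ^ 2)⁻¹ • S)) w := by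
    have := (hasDerivAt_inv hs.ne').comp_hasFDerivAt w hsum
    simpa [Function.comp_def] using this
  set L : Fin d → ((Fin d → ℝ) →L[ℝ] ℝ) :=
    fun k => w k • (-((s ^ 2)⁻¹ • S)) + (∑ j, w j)⁻¹ • ContinuousLinearMap.proj k with hL
  have hcomp_k : ∀ k : Fin d,
      HasFDerivAt (fun v : Fin d → ℝ => v k / ∑ j, v j) (L k) w := by
    intro k
    have hproj : HasFDerivAt (fun v : Fin d → ℝ => v k)
        (ContinuousLinearMap.proj k : (Fin d → ℝ) →L[ℝ] ℝ) w :=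
      (ContinuousLinearMap.proj k : (Fin d → ℝ) →L[ℝ] ℝ).hasFDerivAt
    have := hproj.mul hinv
    have this' : HasFDerivAt (fun v : Fin d → ℝ => v k * (∑ k, v k)⁻¹) _ w := this
    simpa [hL, div_eq_mul_inv] using this'
  have hpi : HasFDerivAt (fun v : Fin d → ℝ => fun k => v k / ∑ j, v j)
      (ContinuousLinearMap.pi L) w := hasFDerivAt_pi.2 hcomp_k
  have hφ : HasFDerivAt
      (fun v : Fin d → ℝ => ((Real.log (∑ k, v k), fun k => v k / ∑ j, v j) : ℝ × (Fin d → ℝ)))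
      ((s⁻¹ • S).prod (ContinuousLinearMap.pi L)) w := hlog.prodMk hpi
  have hfd : HasFDerivAt f
      (fderiv ℝ f (Real.log s, fun k => w k / s))
      (Real.log (∑ k, w k), fun k => w k / ∑ j, w j) := by
    have := (hf.differentiable one_ne_zero).differentiableAt
      (x := (Real.log (∑ k, w k), fun k => w k / ∑ j, w j)) |>.hasFDerivAt
    simpa [hsdef] using this
  have hgd : HasFDerivAt g
      ((fderiv ℝ f (Real.log s, fun k => w k / s)).comp
        ((s⁻¹ • S).prod (ContinuousLinearMap.pi L))) w := by
    rw [hg]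
    exact hfd.comp w hφ
  rw [hgd.fderiv]
  have hval : ((s⁻¹ • S).prod (ContinuousLinearMap.pi L)) (Pi.single i 1)
      = s⁻¹ • (((1 : ℝ), fun j => if j = i then (1 : ℝ) else -(w j / ∑ k, w k)) : ℝ × (Fin d → ℝ)) := by
    have hS1 : S (Pi.single i 1) = 1 := by
      rw [hSapp]
      simp [Pi.single_apply]
    ext
    · simp [ContinuousLinearMap.prod_apply, hS1, Prod.smul_fst]
    · rename_i k
      simp only [ContinuousLinearMap.prod_apply, ContinuousLinearMap.pi_apply, hL,
        ContinuousLinearMap.add_apply, ContinuousLinearMap.smul_apply, ContinuousLinearMap.neg_apply,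
        ContinuousLinearMap.proj_apply, Prod.smul_snd, Pi.smul_apply, smul_eq_mul, hS1]
      rw [← hsdef]
      by_cases hki : k = i
      · subst hki
        simp [hwi, Pi.single_apply]
      · simp only [Pi.single_apply, if_neg hki]
        rw [div_eq_mul_inv, sq, mul_inv]
        ring
  rw [ContinuousLinearMap.comp_apply, hval, map_smul]
  have := hbc i w hw hw0 hwi
  rw [← hsdef] at this
  rw [this]
  simp
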